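/- arXiv:2202.09091 — 2 statements merged into one kernel-verified Lean document; each statement's English description precedes it below -/
import Mathlib

section
/- Let n ≥ 2, l a positive integer, r a prime with gcd(l, r) = 1, and m ≥ 0 an integer. Then π_n(r^{m+1} l) = Σ_{d | l} μ(d) (n^{r^{m+1} l / d} − n^{r^m l / d}), where π_n(k) is the number of primitive words of length k over an alphabet of size n and μ is the Möbius function. -/
variable {A : Type*}

/-- k-fold concatenation of a word with itself. -/
def pw (w : List A) : ℕ → List A
  | 0 => []
  | n + 1 => w ++ pw w n

/-- A nonempty word is primitive if it is not a proper power. -/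
def Primitive (w : List A) : Prop :=
  w ≠ [] ∧ ∀ (v : List A) (m : ℕ), w = pw v m → m = 1

/-- Number of primitive words of length k over an n-letter alphabet. -/
noncomputable def piw (n k : ℕ) : ℕ :=
  Nat.card {w : List (Fin n) // w.length = k ∧ Primitive w}

/-! ### Basic lemmas on `pw` -/

lemma pw_length (w : List A) (k : ℕ) : (pw w k).length = k * w.length := by
  induction k with
  | zero => simp [pw]
  | succ k ih => simp [pw, ih]; ring

lemma pw_one (w : List A) : pw w 1 = w := by simp [pw]

lemma pw_nil (k : ℕ) : pw ([] : List A) k = [] := by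
  induction k with
  | zero => rfl
  | succ k ih => simp [pw, ih]

lemma pw_add (w : List A) (a b : ℕ) : pw w (a + b) = pw w a ++ pw w b := by
  induction a with
  | zero => simp [pw]
  | succ a ih =>
    have : a + 1 + b = (a + b) + 1 := by ring
    rw [this, pw, pw, ih, List.append_assoc]

lemma pw_mul (w : List A) (a b : ℕ) : pw w (a * b) = pw (pw w a) b := by
  induction b with
  | zero => simp [pw]
  | succ b ih =>
    rw [show a * (b + 1) = a + a * b by ring, pw_add, ih]
    rfl

lemma take_pw (v : List A) (e : ℕ) (he : 1 ≤ e) : (pw v e).take v.length = v := by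
  obtain ⟨e, rfl⟩ := Nat.exists_eq_add_of_le he
  rw [add_comm, pw]
  exact List.take_left

section Ext

variable [Inhabited A]

/-- One-sided shift on sequences. -/
def shf : (ℕ → A) → (ℕ → A) := fun s i => s (i + 1)

lemma shf_iterate (d : ℕ) (s : ℕ → A) (i : ℕ) : (shf^[d] s) i = s (i + d) := by
  induction d generalizing s with
  | zero => rfl
  | succ d ih =>
    rw [Function.iterate_succ_apply, ih]
    show s (i + d + 1) = _
    ring_nf

/-- Periodic extension of a word to an infinite sequence. -/
def extw (w : List A) : ℕ → A := fun i => w.getD (i % w.length) default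

lemma isPeriodicPt_shf_iff (w : List A) (d : ℕ) :
    Function.IsPeriodicPt shf d (extw w) ↔ ∀ i, extw w (i + d) = extw w i := by
  constructor
  · intro h i
    have := congrFun h i
    rwa [shf_iterate] at this
  · intro h
    funext i
    rw [shf_iterate]
    exact h i

lemma isPeriodicPt_shf_length (w : List A) :
    Function.IsPeriodicPt shf w.length (extw w) := by
  rw [isPeriodicPt_shf_iff]
  intro i
  simp [extw, Nat.add_mod_right]

lemma getD_pw (w : List A) (e i : ℕ) (h : i < e * w.length) :
    (pw w e).getD i default = w.getD (i % w.length) default := by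
  induction e generalizing i with
  | zero => omega
  | succ e ih =>
    have hsm : (e + 1) * w.length = e * w.length + w.length := Nat.succ_mul e w.length
    rw [pw]
    rcases lt_or_ge i w.length with hi | hi
    · rw [List.getD_append _ _ _ _ hi, Nat.mod_eq_of_lt hi]
    · rw [List.getD_append_right _ _ _ _ hi, Nat.mod_eq_sub_mod hi]
      apply ih
      omega

lemma extw_pw (v : List A) (hv : v ≠ []) (e : ℕ) (he : 1 ≤ e) :
    extw (pw v e) = extw v := by
  have hv0 : 0 < v.length := List.length_pos_iff.mpr hv
  funext i
  show (pw v e).getD (i % (pw v e).length) default = v.getD (i % v.length) default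
  have hel : (pw v e).length = e * v.length := pw_length v e
  have hpos : 0 < e * v.length := by positivity
  rw [hel, getD_pw v e _ (Nat.mod_lt _ hpos), Nat.mod_mod_of_dvd _ (dvd_mul_left _ _)]

lemma isPeriodicPt_of_pw {w v : List A} (hv : v ≠ []) {e : ℕ} (he : 1 ≤ e)
    (hw : w = pw v e) : Function.IsPeriodicPt shf v.length (extw w) := by
  rw [hw, extw_pw v hv e he]
  exact isPeriodicPt_shf_length v

lemma pw_of_isPeriodicPt {w : List A} (hw : w ≠ []) {d : ℕ} (hd0 : 0 < d)
    (hdvd : d ∣ w.length) (hp : Function.IsPeriodicPt shf d (extw w)) :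
    w = pw (w.take d) (w.length / d) := by
  have hw0 : 0 < w.length := List.length_pos_iff.mpr hw
  have hdle : d ≤ w.length := Nat.le_of_dvd hw0 hdvd
  have hlen : (w.take d).length = d := by simp [hdle]
  rw [isPeriodicPt_shf_iff] at hp
  have key : ∀ q r, extw w (d * q + r) = extw w r := by
    intro q
    induction q with
    | zero => simp
    | succ q ih =>
      intro r
      have : d * (q + 1) + r = (d * q + r) + d := by ring
      rw [this, hp, ih]
  have key2 : ∀ i, i < w.length → w.getD i default = w.getD (i % d) default := by
    intro i hi
    have h1 : extw w i = w.getD i default := by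
      show w.getD (i % w.length) default = _
      rw [Nat.mod_eq_of_lt hi]
    have h2 : extw w (i % d) = w.getD (i % d) default := by
      show w.getD (i % d % w.length) default = _
      rw [Nat.mod_eq_of_lt (lt_of_lt_of_le (Nat.mod_lt _ hd0) hdle)]
    rw [← h1, ← h2]
    conv_lhs => rw [show i = d * (i / d) + i % d from (Nat.div_add_mod i d).symm]
    exact key _ _
  have hlen2 : (pw (w.take d) (w.length / d)).length = w.length := by
    rw [pw_length, hlen, Nat.div_mul_cancel hdvd]
  apply List.ext_getElem hlen2.symm
  intro i h1 h2
  have hi : i < w.length := h1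
  have himod : i % d < d := Nat.mod_lt _ hd0
  have htake : (w.take d).getD (i % d) default = w.getD (i % d) default := by
    rw [List.getD_eq_getElem _ default (by rw [hlen]; exact himod), List.getElem_take,
      List.getD_eq_getElem w default (lt_of_lt_of_le himod hdle)]
  rw [← List.getD_eq_getElem w default hi, ← List.getD_eq_getElem _ default h2]
  rw [getD_pw _ _ _ (by rw [hlen, Nat.div_mul_cancel hdvd]; exact hi), hlen, htake]
  exact key2 i hi

/-- The minimal period of (the periodic extension of) a word. -/
noncomputable def minp (w : List A) : ℕ := Function.minimalPeriod shf (extw w)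

lemma minp_dvd_length (w : List A) : minp w ∣ w.length :=
  (isPeriodicPt_shf_length w).minimalPeriod_dvd

lemma minp_pos {w : List A} (hw : w ≠ []) : 0 < minp w :=
  (isPeriodicPt_shf_length w).minimalPeriod_pos (List.length_pos_iff.mpr hw)

lemma minp_le {w : List A} (hw : w ≠ []) : minp w ≤ w.length :=
  Nat.le_of_dvd (List.length_pos_iff.mpr hw) (minp_dvd_length w)

lemma pw_root (w : List A) (hw : w ≠ []) :
    w = pw (w.take (minp w)) (w.length / minp w) :=
  pw_of_isPeriodicPt hw (minp_pos hw) (minp_dvd_length w)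
    (Function.isPeriodicPt_minimalPeriod shf (extw w))

lemma root_primitive (w : List A) (hw : w ≠ []) : Primitive (w.take (minp w)) := by
  have hw0 : 0 < w.length := List.length_pos_iff.mpr hw
  have hlen : (w.take (minp w)).length = minp w := by simp [minp_le hw]
  have hne : w.take (minp w) ≠ [] := by
    rw [← List.length_pos_iff, hlen]; exact minp_pos hw
  refine ⟨hne, ?_⟩
  intro v m hm
  by_contra hm1
  have hv : v ≠ [] := by
    rintro rfl
    rw [pw_nil] at hm
    exact hne hm
  have hm0 : m ≠ 0 := by
    rintro rfl
    exact hne hm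
  have hm2 : 2 ≤ m := by omega
  have hv0 : 0 < v.length := List.length_pos_iff.mpr hv
  have hmv : minp w = m * v.length := by rw [← hlen, hm, pw_length]
  have hvlt : v.length < minp w := by nlinarith
  have hwpw : w = pw v (m * (w.length / minp w)) := by
    rw [pw_mul, ← hm]
    exact pw_root w hw
  have he : 1 ≤ m * (w.length / minp w) := by
    have h1 : 0 < w.length / minp w :=
      Nat.div_pos (minp_le hw) (minp_pos hw)
    exact Nat.mul_pos (by omega) h1
  have hper := isPeriodicPt_of_pw hv he hwpw
  have hle : minp w ≤ v.length := Nat.le_of_dvd hv0 hper.minimalPeriod_dvd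
  omega

lemma minp_pw {v : List A} (hv : Primitive v) (e : ℕ) (he : 1 ≤ e) :
    minp (pw v e) = v.length := by
  have hv0 : v ≠ [] := hv.1
  have hv1 : 0 < v.length := List.length_pos_iff.mpr hv0
  unfold minp
  rw [extw_pw v hv0 e he]
  -- now show minimalPeriod shf (extw v) = v.length, i.e. minp v = v.length
  have hdvd : Function.minimalPeriod shf (extw v) ∣ v.length :=
    (isPeriodicPt_shf_length v).minimalPeriod_dvd
  have hpos : 0 < Function.minimalPeriod shf (extw v) :=
    (isPeriodicPt_shf_length v).minimalPeriod_pos hv1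
  have hroot := pw_root v hv0
  have := hv.2 _ _ hroot
  have hdd : v.length / minp v = 1 := this
  have : v.length = minp v := by
    conv_lhs => rw [← Nat.div_mul_cancel (minp_dvd_length v), hdd, one_mul]
  exact this.symm

end Ext

/-! ### The counting identity -/

lemma sum_piw (n k : ℕ) (hn : 1 ≤ n) (hk : 0 < k) :
    ∑ d ∈ k.divisors, piw n d = n ^ k := by
  classical
  haveI : Inhabited (Fin n) := ⟨⟨0, hn⟩⟩
  let V : ∀ d : ℕ, {w : List (Fin n) // w.length = d} ≃ List.Vector (Fin n) d :=
    fun d => Equiv.refl _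
  haveI FL : ∀ d : ℕ, Fintype {w : List (Fin n) // w.length = d} :=
    fun d => Fintype.ofEquiv _ (V d).symm
  haveI F : ∀ d : ℕ, Finite {v : List (Fin n) // v.length = d ∧ Primitive v} := by
    intro d
    refine Finite.of_injective
      (fun x => (⟨x.1, x.2.1⟩ : {w : List (Fin n) // w.length = d})) ?_
    intro a b h
    simp only [Subtype.mk.injEq] at h
    exact Subtype.ext h
  haveI Ft : ∀ d : ℕ, Fintype {v : List (Fin n) // v.length = d ∧ Primitive v} :=
    fun d => Fintype.ofFinite _
  have hk0 : k ≠ 0 := hk.ne'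
  -- the equivalence
  have hmem : ∀ w : {w : List (Fin n) // w.length = k}, minp w.1 ∈ k.divisors := by
    rintro ⟨w, hwl⟩
    rw [Nat.mem_divisors]
    exact ⟨hwl ▸ minp_dvd_length w, hk0⟩
  have hne : ∀ w : {w : List (Fin n) // w.length = k}, w.1 ≠ [] := by
    rintro ⟨w, hwl⟩
    simpa using List.length_pos_iff.mp (hwl ▸ hk)
  let E : {w : List (Fin n) // w.length = k} ≃
      Σ d : {d : ℕ // d ∈ k.divisors}, {v : List (Fin n) // v.length = d.1 ∧ Primitive v} :=
    { toFun := fun w => ⟨⟨minp w.1, hmem w⟩,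
        ⟨w.1.take (minp w.1),
          by simp [minp_le (hne w), w.2 ▸ minp_le (hne w)],
          root_primitive w.1 (hne w)⟩⟩
      invFun := fun x => ⟨pw x.2.1 (k / x.1.1), by
        have hd := Nat.pos_of_mem_divisors x.1.2
        have hdvd := (Nat.mem_divisors.mp x.1.2).1
        rw [pw_length, x.2.2.1, Nat.div_mul_cancel hdvd]⟩
      left_inv := by
        rintro ⟨w, hwl⟩
        apply Subtype.ext
        show pw (w.take (minp w)) (k / minp w) = w
        have := pw_root w (hne ⟨w, hwl⟩)
        rw [hwl] at this
        exact this.symm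
      right_inv := by
        rintro ⟨⟨d, hd⟩, v, hv1, hv2⟩
        replace hv1 : v.length = d := hv1
        have hd' : d ∣ k := (Nat.mem_divisors.mp hd).1
        have hdpos : 0 < d := Nat.pos_of_mem_divisors hd
        have he : 1 ≤ k / d := Nat.div_pos (Nat.le_of_dvd hk hd') hdpos
        have hv0 : v ≠ [] := hv2.1
        have hmp : minp (pw v (k / d)) = d := by rw [minp_pw hv2 _ he, hv1]
        have htk : (pw v (k / d)).take d = v := by
          have h := take_pw v (k / d) he
          rwa [hv1] at h
        refine Sigma.subtype_ext (Subtype.ext ?_) ?_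
        · exact hmp
        · show (pw v (k / d)).take (minp (pw v (k / d))) = v
          rw [hmp]
          exact htk }
  have hcard : Fintype.card {w : List (Fin n) // w.length = k} =
      ∑ d : {d : ℕ // d ∈ k.divisors},
        Fintype.card {v : List (Fin n) // v.length = d.1 ∧ Primitive v} := by
    rw [Fintype.card_congr E, Fintype.card_sigma]
  have hA : Fintype.card {w : List (Fin n) // w.length = k} = n ^ k := by
    rw [Fintype.card_congr (V k), card_vector, Fintype.card_fin]
  have hpi : ∀ d : ℕ, piw n d =
      Fintype.card {v : List (Fin n) // v.length = d ∧ Primitive v} := by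
    intro d
    rw [piw, Nat.card_eq_fintype_card]
  rw [← hA, hcard]
  rw [← Finset.sum_coe_sort k.divisors (fun d => piw n d)]
  exact Finset.sum_congr rfl fun d _ => hpi d.1

/-! ### Möbius inversion -/

open ArithmeticFunction in
lemma piw_eq_moebius_sum (n k : ℕ) (hn : 1 ≤ n) (hk : 0 < k) :
    (piw n k : ℤ) = ∑ e ∈ k.divisors, (moebius e : ℤ) * (n : ℤ) ^ (k / e) := by
  have h := (sum_eq_iff_sum_mul_moebius_eq (R := ℤ)
    (f := fun d => (piw n d : ℤ)) (g := fun d => (n : ℤ) ^ d)).mp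
    (fun d hd => by
      rw [← Nat.cast_pow, ← sum_piw n d hn hd, Nat.cast_sum]) k hk
  simp only [Int.cast_id] at h
  rw [← h, Nat.sum_divisorsAntidiagonal (fun a b => (moebius a : ℤ) * (n : ℤ) ^ b)]

/-! ### Splitting divisor sums over coprime products -/

lemma sum_divisors_coprime_mul {M : Type*} [AddCommMonoid M] (f : ℕ → M) {a b : ℕ}
    (ha : a ≠ 0) (hb : b ≠ 0) (hab : Nat.Coprime a b) :
    ∑ e ∈ (a * b).divisors, f e = ∑ x ∈ a.divisors, ∑ y ∈ b.divisors, f (x * y) := by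
  rw [← Finset.sum_product']
  refine Finset.sum_nbij' (fun e => (e.gcd a, e.gcd b)) (fun p => p.1 * p.2) ?_ ?_ ?_ ?_ ?_
  · intro e he
    obtain ⟨hed, _⟩ := Nat.mem_divisors.mp he
    simp only [Finset.mem_product, Nat.mem_divisors]
    exact ⟨⟨Nat.gcd_dvd_right _ _, ha⟩, ⟨Nat.gcd_dvd_right _ _, hb⟩⟩
  · intro p hp
    simp only [Finset.mem_product, Nat.mem_divisors] at hp
    rw [Nat.mem_divisors]
    exact ⟨mul_dvd_mul hp.1.1 hp.2.1, mul_ne_zero ha hb⟩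
  · intro e he
    obtain ⟨hed, _⟩ := Nat.mem_divisors.mp he
    exact (Nat.gcd_mul_gcd_eq_iff_dvd_mul_of_coprime hab).mpr hed
  · intro p hp
    simp only [Finset.mem_product, Nat.mem_divisors] at hp
    obtain ⟨⟨hx, _⟩, ⟨hy, _⟩⟩ := hp
    have h1 : (p.1 * p.2).gcd a = p.1 := by
      apply Nat.dvd_antisymm
      · have hcop : Nat.Coprime ((p.1 * p.2).gcd a) p.2 :=
          Nat.Coprime.coprime_dvd_left (Nat.gcd_dvd_right _ _)
            (Nat.Coprime.coprime_dvd_right hy hab)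
        exact hcop.dvd_of_dvd_mul_right (Nat.gcd_dvd_left _ _)
      · exact Nat.dvd_gcd (dvd_mul_right _ _) hx
    have h2 : (p.1 * p.2).gcd b = p.2 := by
      apply Nat.dvd_antisymm
      · have hcop : Nat.Coprime ((p.1 * p.2).gcd b) p.1 :=
          Nat.Coprime.coprime_dvd_left (Nat.gcd_dvd_right _ _)
            (Nat.Coprime.coprime_dvd_right hx hab.symm)
        exact hcop.dvd_of_dvd_mul_left (Nat.gcd_dvd_left _ _)
      · exact Nat.dvd_gcd (dvd_mul_left _ _) hy
    show ((p.1 * p.2).gcd a, (p.1 * p.2).gcd b) = p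
    rw [h1, h2]
  · intro e he
    obtain ⟨hed, _⟩ := Nat.mem_divisors.mp he
    show f e = f (e.gcd a * e.gcd b)
    rw [(Nat.gcd_mul_gcd_eq_iff_dvd_mul_of_coprime hab).mpr hed]

/-! ### Main theorem -/

open ArithmeticFunction in
theorem piw_moebius_formula (n l r m : ℕ) (hn : 2 ≤ n) (hl : 0 < l) (hr : r.Prime)
    (hgcd : Nat.gcd l r = 1) :
    (piw n (r ^ (m + 1) * l) : ℤ) =
      ∑ d ∈ l.divisors, (moebius d : ℤ) *
        ((n : ℤ) ^ (r ^ (m + 1) * l / d) - (n : ℤ) ^ (r ^ m * l / d)) := by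
  have hl0 : l ≠ 0 := hl.ne'
  have hr0 : r ^ (m + 1) ≠ 0 := pow_ne_zero _ hr.pos.ne'
  have hcop : Nat.Coprime (r ^ (m + 1)) l :=
    Nat.Coprime.pow_left _ (Nat.coprime_comm.mp hgcd)
  have hK : 0 < r ^ (m + 1) * l := by positivity
  rw [piw_eq_moebius_sum n _ (by omega) hK]
  rw [sum_divisors_coprime_mul _ hr0 hl0 hcop]
  rw [Nat.divisors_prime_pow hr, Finset.sum_map]
  simp only [Function.Embedding.coeFn_mk]
  -- the summand as a function of the exponent i
  set G : ℕ → ℤ := fun i => ∑ y ∈ l.divisors,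
    (moebius (r ^ i * y) : ℤ) * (n : ℤ) ^ (r ^ (m + 1) * l / (r ^ i * y)) with hG
  have hzero : ∀ i ∈ Finset.range (m + 2), i ∉ ({0, 1} : Finset ℕ) → G i = 0 := by
    intro i _ hi
    simp only [Finset.mem_insert, Finset.mem_singleton] at hi
    have h2 : 2 ≤ i := by omega
    apply Finset.sum_eq_zero
    intro y _
    have : ¬ Squarefree (r ^ i * y) := by
      intro hs
      have : r * r ∣ r ^ i * y := by
        refine Dvd.dvd.mul_right ?_ y
        have : r * r = r ^ 2 := by ring
        rw [this]
        exact pow_dvd_pow r h2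
      exact hr.not_isUnit (hs r this)
    rw [moebius_eq_zero_of_not_squarefree this]
    simp
  have hsub : ({0, 1} : Finset ℕ) ⊆ Finset.range (m + 2) := by
    intro i hi
    simp only [Finset.mem_insert, Finset.mem_singleton] at hi
    rcases hi with rfl | rfl <;> simp [Finset.mem_range] <;> omega
  rw [show (∑ i ∈ Finset.range (m + 2), G i) = ∑ i ∈ ({0, 1} : Finset ℕ), G i from
    (Finset.sum_subset hsub (fun i hi hni => hzero i hi hni)).symm]
  rw [Finset.sum_insert (by simp), Finset.sum_singleton]
  -- compute G 0 and G 1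
  have hG0 : G 0 = ∑ d ∈ l.divisors, (moebius d : ℤ) * (n : ℤ) ^ (r ^ (m + 1) * l / d) := by
    rw [hG]
    simp
  have hG1 : G 1 = ∑ d ∈ l.divisors, -((moebius d : ℤ) * (n : ℤ) ^ (r ^ m * l / d)) := by
    rw [hG]
    apply Finset.sum_congr rfl
    intro y hy
    have hyl : y ∣ l := (Nat.mem_divisors.mp hy).1
    have hcopy : Nat.Coprime r y :=
      Nat.Coprime.coprime_dvd_right hyl (Nat.coprime_comm.mp hgcd)
    have hmu : (moebius (r * y) : ℤ) = -(moebius y : ℤ) := by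
      rw [isMultiplicative_moebius.map_mul_of_coprime hcopy,
        moebius_apply_prime hr]
      push_cast
      ring
    have hexp : r ^ (m + 1) * l / (r * y) = r ^ m * l / y := by
      have : r ^ (m + 1) * l = r * (r ^ m * l) := by ring
      rw [this, Nat.mul_div_mul_left _ _ hr.pos]
    rw [pow_one, hmu, hexp]
    ring
  rw [hG0, hG1, ← Finset.sum_add_distrib]
  apply Finset.sum_congr rfl
  intro d _
  ring
end

section
/- For every n ≥ 2 there is a constant C (one may take C = 2) such that for all positive integers l, ε₂(n,l) = Σ_{d ∈ Λ(l)} π_n(3l/d) ≤ C · n^{3l/4}, where Λ(l) = {d : d | l, 3 ∤ d, d ≥ 4} and π_n(k) counts primitive words of length k over an n-letter alphabet. -/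
variable {A : Type*}

lemma piw_le_pow (n k : ℕ) : piw n k ≤ n ^ k := by
  haveI : Finite {l : List (Fin n) // l.length = k} := (List.finite_length_eq (Fin n) k).to_subtype
  have h : piw n k ≤ Nat.card (List.Vector (Fin n) k) := by
    apply Nat.card_le_card_of_injective
      (fun (w : {w : List (Fin n) // w.length = k ∧ Primitive w}) =>
        (⟨w.1, w.2.1⟩ : List.Vector (Fin n) k))
    intro a b hab
    simp only [Subtype.mk.injEq] at hab
    exact Subtype.ext hab
  simpa [Nat.card_eq_fintype_card, card_vector, Fintype.card_fin] using h

theorem eps2S_bound (n : ℕ) (hn : 2 ≤ n) :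
    ∃ C : ℝ, C = 2 ∧ ∀ l : ℕ, 0 < l →
      ((∑ d ∈ l.divisors.filter (fun d => 4 ≤ d ∧ ¬ 3 ∣ d), piw n (3 * l / d) : ℕ) : ℝ) ≤
        C * (n : ℝ) ^ ((3 * (l : ℝ)) / 4) := by
  refine ⟨2, rfl, fun l hl => ?_⟩
  set D := l.divisors.filter (fun d => 4 ≤ d ∧ ¬ 3 ∣ d) with hD
  set m := 3 * l / 4 with hm
  have h3l : 3 * l ≠ 0 := by positivity
  -- Step 1: bound by powers
  have h1 : (∑ d ∈ D, piw n (3 * l / d)) ≤ ∑ d ∈ D, n ^ (3 * l / d) :=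
    Finset.sum_le_sum fun d _ => piw_le_pow n _
  -- injectivity of d ↦ 3*l/d on D
  have hinj : Set.InjOn (fun d => 3 * l / d) D := by
    intro a ha b hb hab
    simp only [hD, Finset.coe_filter, Set.mem_setOf_eq, Nat.mem_divisors] at ha hb
    have hda : a ∣ 3 * l := ha.1.1.mul_left 3
    have hdb : b ∣ 3 * l := hb.1.1.mul_left 3
    have := Nat.div_div_self hda h3l
    rw [show 3 * l / a = 3 * l / b from hab, Nat.div_div_self hdb h3l] at this
    exact this.symm
  have h2 : (∑ d ∈ D, n ^ (3 * l / d)) ≤ ∑ e ∈ Finset.range (m + 1), n ^ e := by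
    rw [← Finset.sum_image (fun a ha b hb => hinj ha hb)]
    apply Finset.sum_le_sum_of_subset
    intro e he
    obtain ⟨d, hd, rfl⟩ := Finset.mem_image.mp he
    simp only [hD, Finset.mem_filter, Nat.mem_divisors] at hd
    have : 3 * l / d ≤ m := Nat.div_le_div_left hd.2.1 (by norm_num)
    exact Finset.mem_range.mpr (Nat.lt_succ_of_le this)
  have hcast : ((∑ d ∈ D, piw n (3 * l / d) : ℕ) : ℝ)
      ≤ ((∑ e ∈ Finset.range (m + 1), n ^ e : ℕ) : ℝ) := by
    exact_mod_cast h1.trans h2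
  refine hcast.trans ?_
  -- geometric sum bound
  have hn1 : (1 : ℝ) < (n : ℝ) := by exact_mod_cast hn.trans_lt' (by norm_num)
  have hne : (n : ℝ) ≠ 1 := ne_of_gt hn1
  have hpos : (0 : ℝ) < (n : ℝ) - 1 := by linarith
  push_cast
  rw [geom_sum_eq hne]
  have h4 : ((n : ℝ) ^ (m + 1) - 1) / ((n : ℝ) - 1) ≤ 2 * (n : ℝ) ^ m := by
    rw [div_le_iff₀ hpos]
    have h2n : (2 : ℝ) ≤ (n : ℝ) := by exact_mod_cast hn
    have hpm : (0 : ℝ) < (n : ℝ) ^ m := by positivity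
    have : (n : ℝ) ^ (m + 1) = (n : ℝ) ^ m * n := pow_succ _ _
    nlinarith
  refine h4.trans ?_
  have h5 : ((n : ℝ)) ^ m ≤ (n : ℝ) ^ ((3 * (l : ℝ)) / 4) := by
    rw [← Real.rpow_natCast (n : ℝ) m]
    apply Real.rpow_le_rpow_of_exponent_le hn1.le
    have := Nat.cast_div_le (α := ℝ) (m := 3 * l) (n := 4)
    rw [hm]
    push_cast at this ⊢
    linarith
  linarith
end
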